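/- arXiv:2112.02645 — 2 statements merged into one kernel-verified Lean document; each statement's English description precedes it below -/
import Mathlib

section
/- Let D be a weighted oriented graph with underlying graph G and edge ideal I(D) in S = K[t_1,…,t_s]. A prime ideal p of S is an associated prime of I(D) if and only if p = (C), the prime ideal generated by the variables in C, for some strong vertex cover C of D. -/
open MvPolynomial Pointwise

/-- A weighted oriented graph `D` on vertices `t_1, …, t_s` (indexed by `Fin s`):
a set of directed edges with no loops such that for each unordered pair of vertices at
most one orientation occurs, together with a weight function `w : V(D) → ℕ₊` which
equals `1` on every source vertex (a vertex having only outgoing edges, i.e. no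
incoming edge). -/
structure WOGraph (s : ℕ) where
  E : Set (Fin s × Fin s)
  no_loops : ∀ i : Fin s, (i, i) ∉ E
  no_two_orientations : ∀ i j : Fin s, (i, j) ∈ E → (j, i) ∉ E
  w : Fin s → ℕ
  w_pos : ∀ i, 1 ≤ w i
  source_weight_one : ∀ i : Fin s, (∀ j, (j, i) ∉ E) → w i = 1

/-- A vertex of `D` is a sink if it has only incoming edges. -/
def WOGraph.IsSink {s : ℕ} (D : WOGraph s) (i : Fin s) : Prop := ∀ j, (i, j) ∉ D.E

/-- `V⁺(D)`: the set of vertices of weight greater than `1`. -/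
def WOGraph.Vplus {s : ℕ} (D : WOGraph s) : Set (Fin s) := { i | 1 < D.w i }

/-- The underlying simple graph `G` of `D`, with edges `{t_i, t_j}` for `(t_i,t_j) ∈ E(D)`. -/
def WOGraph.underlying {s : ℕ} (D : WOGraph s) : SimpleGraph (Fin s) :=
  SimpleGraph.fromRel (fun i j => (i, j) ∈ D.E)

/-- The edge ideal `I(D) = (t_i t_j^{w_j} : (t_i, t_j) ∈ E(D))` of `D`
in `S = K[t_1, …, t_s]`. -/
noncomputable def WOGraph.edgeIdeal {s : ℕ} (D : WOGraph s) (K : Type*) [Field K] :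
    Ideal (MvPolynomial (Fin s) K) :=
  Ideal.span { f | ∃ e ∈ D.E, f = X e.1 * X e.2 ^ D.w e.2 }

/-- The set `Ass(I)` of associated primes of `I`: the prime ideals of the form
`(I : f)` for some `f ∈ S`. -/
def assPrimes {R : Type*} [CommRing R] (I : Ideal R) : Set (Ideal R) :=
  { p | p.IsPrime ∧ ∃ f : R, p = Submodule.colon I (Ideal.span {f}) }

/-- The neighbor set `N_G(x)` of a vertex in the underlying graph of `D`. -/
def WOGraph.neighbors {s : ℕ} (D : WOGraph s) (x : Fin s) : Set (Fin s) :=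
  { y | (x, y) ∈ D.E ∨ (y, x) ∈ D.E }

/-- A vertex cover of the underlying graph of `D`. -/
def WOGraph.IsVertexCover {s : ℕ} (D : WOGraph s) (C : Set (Fin s)) : Prop :=
  ∀ e ∈ D.E, (e : Fin s × Fin s).1 ∈ C ∨ e.2 ∈ C

/-- `L_1(C) = {x ∈ C : ∃ (x,y) ∈ E(D) with y ∉ C}`. -/
def WOGraph.L1 {s : ℕ} (D : WOGraph s) (C : Set (Fin s)) : Set (Fin s) :=
  { x | x ∈ C ∧ ∃ y, (x, y) ∈ D.E ∧ y ∉ C }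

/-- `L_3(C) = {x ∈ C : N_G(x) ⊆ C}`. -/
def WOGraph.L3 {s : ℕ} (D : WOGraph s) (C : Set (Fin s)) : Set (Fin s) :=
  { x | x ∈ C ∧ D.neighbors x ⊆ C }

/-- `L_2(C) = C \ (L_1(C) ∪ L_3(C))`. -/
def WOGraph.L2 {s : ℕ} (D : WOGraph s) (C : Set (Fin s)) : Set (Fin s) :=
  C \ (D.L1 C ∪ D.L3 C)

/-- A minimal vertex cover: a vertex cover minimal with respect to inclusion. -/
def WOGraph.IsMinimalVertexCover {s : ℕ} (D : WOGraph s) (C : Set (Fin s)) : Prop :=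
  D.IsVertexCover C ∧ ∀ C' ⊆ C, D.IsVertexCover C' → C' = C

/-- A strong vertex cover of `D`: a vertex cover `C` which is a minimal vertex cover,
or else such that for every `x ∈ L_3(C)` there is `(y, x) ∈ E(D)` with
`y ∈ L_2(C) ∪ L_3(C)` and `w(y) ≥ 2`. -/
def WOGraph.IsStrongVertexCover {s : ℕ} (D : WOGraph s) (C : Set (Fin s)) : Prop :=
  D.IsVertexCover C ∧
    (D.IsMinimalVertexCover C ∨
      ∀ x ∈ D.L3 C, ∃ y, (y, x) ∈ D.E ∧ y ∈ D.L2 C ∪ D.L3 C ∧ 2 ≤ D.w y)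

/-- The irreducible ideal `I_C = (L_1(C) ∪ {t_i^{w_i} : t_i ∈ L_2(C) ∪ L_3(C)})`
attached to a strong vertex cover `C`. -/
noncomputable def coverIdeal (K : Type*) [Field K] {s : ℕ} (D : WOGraph s) (C : Set (Fin s)) :
    Ideal (MvPolynomial (Fin s) K) :=
  Ideal.span ((fun x => (X x : MvPolynomial (Fin s) K)) '' D.L1 C ∪
    (fun x => (X x : MvPolynomial (Fin s) K) ^ D.w x) '' (D.L2 C ∪ D.L3 C))

namespace PRTAux

open Finsupp MvPolynomial

variable {s : ℕ} {K : Type*} [Field K]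

/-- The exponent of the generator attached to an edge. -/
noncomputable def gen (D : WOGraph s) (e : Fin s × Fin s) : Fin s →₀ ℕ :=
  Finsupp.single e.1 1 + Finsupp.single e.2 (D.w e.2)

/-- The exponents of monomials lying in the edge ideal. -/
def Exps (D : WOGraph s) : Set (Fin s →₀ ℕ) := { v | ∃ e ∈ D.E, gen D e ≤ v }

lemma exps_mono {D : WOGraph s} {v v' : Fin s →₀ ℕ} (h : v ∈ Exps D) (hle : v ≤ v') :
    v' ∈ Exps D := by
  obtain ⟨e, he, hg⟩ := h; exact ⟨e, he, hg.trans hle⟩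

lemma gen_monomial (D : WOGraph s) (e : Fin s × Fin s) :
    (X e.1 * X e.2 ^ D.w e.2 : MvPolynomial (Fin s) K) = monomial (gen D e) 1 := by
  rw [← pow_one (X e.1), X_pow_eq_monomial, X_pow_eq_monomial, monomial_mul, one_mul, gen]

lemma edgeIdeal_eq (D : WOGraph s) :
    D.edgeIdeal K =
      Ideal.span ((fun v => (MvPolynomial.monomial v (1 : K))) ''
        { v | ∃ e ∈ D.E, v = gen D e }) := by
  unfold WOGraph.edgeIdeal
  congr 1
  ext f
  constructor
  · rintro ⟨e, he, rfl⟩; exact ⟨gen D e, ⟨e, he, rfl⟩, (gen_monomial D e).symm⟩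
  · rintro ⟨v, ⟨e, he, rfl⟩, rfl⟩; exact ⟨e, he, (gen_monomial D e).symm⟩

lemma mem_edgeIdeal_iff (D : WOGraph s) (f : MvPolynomial (Fin s) K) :
    f ∈ D.edgeIdeal K ↔ ∀ v ∈ f.support, v ∈ Exps D := by
  rw [edgeIdeal_eq, MvPolynomial.mem_ideal_span_monomial_image]
  constructor
  · intro h v hv
    obtain ⟨si, ⟨e, he, rfl⟩, hle⟩ := h v hv
    exact ⟨e, he, hle⟩
  · intro h v hv
    obtain ⟨e, he, hle⟩ := h v hv
    exact ⟨gen D e, ⟨e, he, rfl⟩, hle⟩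

lemma monomial_mem_edgeIdeal (D : WOGraph s) {v : Fin s →₀ ℕ} (hv : v ∈ Exps D) {c : K} :
    MvPolynomial.monomial v c ∈ D.edgeIdeal K := by
  classical
  rw [mem_edgeIdeal_iff]
  intro v' hv'
  rw [MvPolynomial.support_monomial] at hv'
  split_ifs at hv' with h
  · simp at hv'
  · simp only [Finset.mem_singleton] at hv'; subst hv'; exact hv

lemma mem_colon_iff (D : WOGraph s) (f g : MvPolynomial (Fin s) K) :
    g ∈ Submodule.colon (D.edgeIdeal K) (Ideal.span {f}) ↔ g * f ∈ D.edgeIdeal K :=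
  Ideal.mem_colon_span_singleton

lemma mem_spanX_iff (C : Set (Fin s)) (f : MvPolynomial (Fin s) K) :
    f ∈ Ideal.span ((fun x => (MvPolynomial.X x : MvPolynomial (Fin s) K)) '' C) ↔
      ∀ v ∈ f.support, ∃ i ∈ C, v i ≠ 0 :=
  MvPolynomial.mem_ideal_span_X_image

/-- If a monomial lies in a prime ideal, some variable occurring in it does. -/
lemma monomial_mem_prime {p : Ideal (MvPolynomial (Fin s) K)} (hp : p.IsPrime)
    {u : Fin s →₀ ℕ} (h : MvPolynomial.monomial u (1 : K) ∈ p) :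
    ∃ i, u i ≠ 0 ∧ MvPolynomial.X i ∈ p := by
  haveI := hp
  rw [← MvPolynomial.prod_X_pow_eq_monomial, Ideal.IsPrime.prod_mem_iff] at h
  obtain ⟨i, hi, hXi⟩ := h
  have hu : u i ≠ 0 := Finsupp.mem_support_iff.mp hi
  exact ⟨i, hu, (hp.pow_mem_iff_mem _ (Nat.pos_of_ne_zero hu)).mp hXi⟩

/-- colon ideals only depend on the witness modulo `I`. -/
lemma colon_congr {I : Ideal (MvPolynomial (Fin s) K)} {f f' : MvPolynomial (Fin s) K}
    (h : f - f' ∈ I) :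
    Submodule.colon I (Ideal.span {f}) = Submodule.colon I (Ideal.span {f'}) := by
  ext g
  rw [Ideal.mem_colon_span_singleton, Ideal.mem_colon_span_singleton]
  have hgf : g * (f - f') ∈ I := Ideal.mul_mem_left _ _ h
  constructor
  · intro hg
    have : g * f' = g * f - g * (f - f') := by ring
    rw [this]; exact Ideal.sub_mem _ hg hgf
  · intro hg
    have : g * f = g * f' + g * (f - f') := by ring
    rw [this]; exact Ideal.add_mem _ hg hgf

lemma L1_disjoint_L3 (D : WOGraph s) (C : Set (Fin s)) : Disjoint (D.L1 C) (D.L3 C) := by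
  rw [Set.disjoint_left]
  rintro x ⟨hxC, y, hxy, hyC⟩ ⟨_, hnb⟩
  exact hyC (hnb (Or.inl hxy))

lemma mem_L2_union_L3 {D : WOGraph s} {C : Set (Fin s)} {y : Fin s} (hyC : y ∈ C)
    (hyL1 : y ∉ D.L1 C) : y ∈ D.L2 C ∪ D.L3 C := by
  by_cases hy3 : y ∈ D.L3 C
  · exact Or.inr hy3
  · exact Or.inl ⟨hyC, fun h => h.elim hyL1 hy3⟩

lemma minimal_L3_empty {D : WOGraph s} {C : Set (Fin s)} (h : D.IsMinimalVertexCover C) :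
    D.L3 C = ∅ := by
  by_contra hne
  obtain ⟨x, hxC, hnb⟩ := Set.nonempty_iff_ne_empty.mpr hne
  have hcov : D.IsVertexCover (C \ {x}) := by
    intro e he
    have he' : (e.1, e.2) ∈ D.E := by rwa [Prod.mk.eta]
    rcases h.1 e he with h1 | h2
    · by_cases hex : e.1 = x
      · have hx2 : (x, e.2) ∈ D.E := by rw [← hex]; exact he'
        refine Or.inr ⟨hnb (Or.inl hx2), ?_⟩
        simp only [Set.mem_singleton_iff]
        intro hx; exact D.no_loops x (hx ▸ hx2)
      · exact Or.inl ⟨h1, hex⟩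
    · by_cases hex : e.2 = x
      · have hx2 : (e.1, x) ∈ D.E := by rw [← hex]; exact he'
        refine Or.inl ⟨hnb (Or.inr hx2), ?_⟩
        simp only [Set.mem_singleton_iff]
        intro hx; exact D.no_loops x (hx ▸ hx2)
      · exact Or.inr ⟨h2, hex⟩
  have := h.2 (C \ {x}) Set.diff_subset hcov
  have hx : x ∈ C \ {x} := this.symm ▸ hxC
  exact hx.2 rfl



open scoped Classical in
/-- The part of a polynomial supported on exponents in `P`. -/
noncomputable def part (P : Set (Fin s →₀ ℕ)) (f : MvPolynomial (Fin s) K) :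
    MvPolynomial (Fin s) K :=
  ∑ v ∈ f.support.filter (fun v => v ∈ P), monomial v (MvPolynomial.coeff v f)

open scoped Classical in
lemma coeff_part (P : Set (Fin s →₀ ℕ)) (f : MvPolynomial (Fin s) K) (v : Fin s →₀ ℕ) :
    MvPolynomial.coeff v (part P f) = if v ∈ P then MvPolynomial.coeff v f else 0 := by
  unfold part
  rw [MvPolynomial.coeff_sum]
  simp only [MvPolynomial.coeff_monomial]
  rw [Finset.sum_ite_eq']
  by_cases hP : v ∈ P
  · by_cases hs : v ∈ f.support
    · rw [if_pos (Finset.mem_filter.mpr ⟨hs, hP⟩), if_pos hP]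
    · rw [if_neg (fun hmem => hs (Finset.mem_filter.mp hmem).1), if_pos hP,
        MvPolynomial.notMem_support_iff.mp hs]
  · rw [if_neg (fun hmem => hP (Finset.mem_filter.mp hmem).2), if_neg hP]

lemma mem_support_part {P : Set (Fin s →₀ ℕ)} {f : MvPolynomial (Fin s) K} {v : Fin s →₀ ℕ} :
    v ∈ (part P f).support ↔ v ∈ f.support ∧ v ∈ P := by
  classical
  rw [MvPolynomial.mem_support_iff, coeff_part]
  by_cases hP : v ∈ P <;> simp [hP, MvPolynomial.mem_support_iff]

lemma part_add_part_compl (P : Set (Fin s →₀ ℕ)) (f : MvPolynomial (Fin s) K) :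
    part P f + part Pᶜ f = f := by
  apply MvPolynomial.ext
  intro v
  classical
  rw [MvPolynomial.coeff_add, coeff_part, coeff_part]
  by_cases hP : v ∈ P <;> simp [hP]

lemma sub_part_compl (P : Set (Fin s →₀ ℕ)) (f : MvPolynomial (Fin s) K) :
    f - part Pᶜ f = part P f := by
  apply MvPolynomial.ext
  intro v
  classical
  rw [MvPolynomial.coeff_sub, coeff_part, coeff_part]
  by_cases hP : v ∈ P <;> simp [hP]

lemma sub_part (P : Set (Fin s →₀ ℕ)) (f : MvPolynomial (Fin s) K) :
    f - part P f = part Pᶜ f := by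
  apply MvPolynomial.ext
  intro v
  classical
  rw [MvPolynomial.coeff_sub, coeff_part, coeff_part]
  by_cases hP : v ∈ P <;> simp [hP]

lemma part_exps_mem (D : WOGraph s) (f : MvPolynomial (Fin s) K) :
    part (Exps D) f ∈ D.edgeIdeal K := by
  rw [mem_edgeIdeal_iff]
  intro v hv
  exact (mem_support_part.mp hv).2

lemma colon_purify (D : WOGraph s) (F : MvPolynomial (Fin s) K) :
    Submodule.colon (D.edgeIdeal K) (Ideal.span {F}) =
      Submodule.colon (D.edgeIdeal K) (Ideal.span {part (Exps D)ᶜ F}) :=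
  colon_congr (by rw [sub_part_compl]; exact part_exps_mem D F)

lemma X_mul_monomial (i : Fin s) (b : Fin s →₀ ℕ) :
    (MvPolynomial.X i : MvPolynomial (Fin s) K) * monomial b 1 =
      monomial (Finsupp.single i 1 + b) 1 := by
  rw [← pow_one (MvPolynomial.X i), MvPolynomial.X_pow_eq_monomial,
    MvPolynomial.monomial_mul, one_mul]

lemma mem_exps_of_mul_monomial {D : WOGraph s} {g : MvPolynomial (Fin s) K}
    {b v : Fin s →₀ ℕ} (hv : v ∈ g.support)
    (h : g * monomial b (1 : K) ∈ D.edgeIdeal K) : v + b ∈ Exps D := by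
  refine (mem_edgeIdeal_iff D _).mp h (v + b) ?_
  rw [MvPolynomial.mem_support_iff, MvPolynomial.coeff_mul_monomial, mul_one]
  exact MvPolynomial.mem_support_iff.mp hv

lemma mem_exps_of_monomial_mul {D : WOGraph s} {g : MvPolynomial (Fin s) K}
    {u v : Fin s →₀ ℕ} (hv : v ∈ g.support)
    (h : monomial u (1 : K) * g ∈ D.edgeIdeal K) : u + v ∈ Exps D := by
  refine (mem_edgeIdeal_iff D _).mp h (u + v) ?_
  rw [MvPolynomial.mem_support_iff, MvPolynomial.coeff_monomial_mul, one_mul]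
  exact MvPolynomial.mem_support_iff.mp hv

/-- Key existence lemma, induction form. -/
lemma witness_aux (D : WOGraph s) {p : Ideal (MvPolynomial (Fin s) K)}
    (hp : p.IsPrime) :
    ∀ n : ℕ, ∀ f : MvPolynomial (Fin s) K, f.support.card ≤ n →
      (∀ v ∈ f.support, v ∉ Exps D) →
      p = Submodule.colon (D.edgeIdeal K) (Ideal.span {f}) →
      ∃ b : Fin s →₀ ℕ,
        p = Submodule.colon (D.edgeIdeal K) (Ideal.span {monomial b (1 : K)}) := by
  intro n
  induction n with
  | zero =>
    intro f hcard _ hpf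
    have hf : f = 0 := MvPolynomial.support_eq_empty.mp (Finset.card_eq_zero.mp
      (Nat.le_zero.mp hcard))
    exfalso
    apply hp.ne_top
    rw [Ideal.eq_top_iff_one, hpf, mem_colon_iff, hf, mul_zero]
    exact Ideal.zero_mem _
  | succ n ih =>
    intro f hcard hsupp hpf
    by_cases hf0 : f = 0
    · exfalso
      apply hp.ne_top
      rw [Ideal.eq_top_iff_one, hpf, mem_colon_iff, hf0, mul_zero]
      exact Ideal.zero_mem _
    obtain ⟨b₀, hb₀⟩ := MvPolynomial.support_nonempty.mpr hf0
    have hmemp : ∀ g' : MvPolynomial (Fin s) K, g' ∈ p ↔ g' * f ∈ D.edgeIdeal K := by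
      intro g'; rw [hpf, mem_colon_iff]
    set C : Set (Fin s) := { i | MvPolynomial.X i ∈ p } with hC
    set Q : Ideal (MvPolynomial (Fin s) K) :=
      Ideal.span ((fun x => (MvPolynomial.X x : MvPolynomial (Fin s) K)) '' C) with hQ
    have hQp : Q ≤ p := by
      rw [hQ, Ideal.span_le]
      rintro _ ⟨i, hi, rfl⟩
      exact hi
    have hXu_notp : ∀ u : Fin s →₀ ℕ, (∀ i ∈ C, u i = 0) →
        monomial u (1 : K) ∉ p := by
      intro u hu hmem
      obtain ⟨i, hne, hXi⟩ := monomial_mem_prime hp hmem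
      exact hne (hu i hXi)
    -- the recursion step
    have hrec : ∀ u b : Fin s →₀ ℕ, (∀ i ∈ C, u i = 0) → b ∈ f.support →
        u + b ∈ Exps D →
        ∃ b' : Fin s →₀ ℕ,
          p = Submodule.colon (D.edgeIdeal K) (Ideal.span {monomial b' (1 : K)}) := by
      intro u b hu hb hub
      classical
      have hunotp := hXu_notp u hu
      have hcolon : p = Submodule.colon (D.edgeIdeal K)
          (Ideal.span {monomial u (1 : K) * f}) := by
        ext g'
        rw [mem_colon_iff]
        constructor
        · intro hg'
          have h1 : g' * f ∈ D.edgeIdeal K := (hmemp g').mp hg'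
          have heq : g' * (monomial u (1 : K) * f) = monomial u (1 : K) * (g' * f) := by
            ring
          rw [heq]
          exact Ideal.mul_mem_left _ _ h1
        · intro hg'
          have heq : (g' * monomial u (1 : K)) * f = g' * (monomial u (1 : K) * f) := by
            ring
          have h2 : g' * monomial u (1 : K) ∈ p := by
            rw [hmemp, heq]; exact hg'
          rcases hp.mem_or_mem h2 with h | h
          · exact h
          · exact absurd h hunotp
      set f2 : MvPolynomial (Fin s) K := part (Exps D)ᶜ (monomial u (1 : K) * f) with hf2
      have hcol2 : p = Submodule.colon (D.edgeIdeal K) (Ideal.span {f2}) := by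
        rw [hcolon, colon_purify]
      refine ih f2 ?_ ?_ hcol2
      · -- cardinality drop
        have hT : f2.support ⊆ ((f.support).image (fun z => u + z)).erase (u + b) := by
          intro v hv
          obtain ⟨hv1, hv2⟩ := mem_support_part.mp hv
          have hvs := MvPolynomial.support_mul _ _ hv1
          rw [Finset.mem_add] at hvs
          obtain ⟨y, hy, z, hz, hyz⟩ := hvs
          have hy' : y = u := by
            have := MvPolynomial.support_monomial (s := u) (a := (1:K)) ▸ hy
            simp only [if_neg (one_ne_zero (α := K)), Finset.mem_singleton] at this
            exact this
          refine Finset.mem_erase.mpr ⟨?_, ?_⟩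
          · intro hveq
            exact hv2 (by rw [hveq]; exact hub)
          · exact Finset.mem_image.mpr ⟨z, hz, by rw [← hyz, hy']⟩
        have h1 : (u + b) ∈ (f.support).image (fun z => u + z) :=
          Finset.mem_image.mpr ⟨b, hb, rfl⟩
        have h2 := Finset.card_le_card hT
        rw [Finset.card_erase_of_mem h1] at h2
        have h3 := Finset.card_image_le (s := f.support) (f := fun z => u + z)
        omega
      · intro v hv
        exact (mem_support_part.mp hv).2
    -- main case split
    by_cases hsub : p ≤ Q
    · have hpQ : p = Q := le_antisymm hsub hQp
      by_cases hsub2 :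
          Submodule.colon (D.edgeIdeal K) (Ideal.span {monomial b₀ (1 : K)}) ≤ p
      · refine ⟨b₀, le_antisymm ?_ hsub2⟩
        rw [hpQ, hQ, Ideal.span_le]
        rintro _ ⟨i, hiC, rfl⟩
        rw [SetLike.mem_coe, mem_colon_iff, X_mul_monomial]
        apply monomial_mem_edgeIdeal
        have hXif : MvPolynomial.X i * f ∈ D.edgeIdeal K := (hmemp _).mp hiC
        rw [← pow_one (MvPolynomial.X i), MvPolynomial.X_pow_eq_monomial] at hXif
        exact mem_exps_of_monomial_mul hb₀ hXif
      · obtain ⟨g, hgcol, hgp⟩ := SetLike.not_le_iff_exists.mp hsub2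
        have hgQ : ¬ ∀ v ∈ g.support, ∃ i ∈ C, v i ≠ 0 := by
          intro hall
          exact hgp (hpQ ▸ (mem_spanX_iff C g).mpr hall)
        push_neg at hgQ
        obtain ⟨v, hv, hvC⟩ := hgQ
        have hgI : g * monomial b₀ (1 : K) ∈ D.edgeIdeal K := (mem_colon_iff _ _ _).mp hgcol
        exact hrec v b₀ hvC hb₀ (mem_exps_of_mul_monomial hv hgI)
    · obtain ⟨g, hgp, hgQ⟩ := SetLike.not_le_iff_exists.mp hsub
      classical
      set P : Set (Fin s →₀ ℕ) := { v | ∀ i ∈ C, v i = 0 } with hP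
      set h : MvPolynomial (Fin s) K := part P g with hh
      have hgsub : g - h ∈ Q := by
        rw [hh, sub_part]
        rw [hQ, mem_spanX_iff]
        intro v hv
        have := (mem_support_part.mp hv).2
        rw [Set.mem_compl_iff, hP] at this
        simp only [Set.mem_setOf_eq] at this
        push_neg at this
        exact this
      have hhp : h ∈ p := by
        have : h = g - (g - h) := by ring
        rw [this]
        exact Ideal.sub_mem _ hgp (hQp hgsub)
      have hh0 : h ≠ 0 := by
        have : ¬ ∀ v ∈ g.support, ∃ i ∈ C, v i ≠ 0 := by
          intro hall
          exact hgQ ((mem_spanX_iff C g).mpr hall)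
        push_neg at this
        obtain ⟨v₀, hv₀, hv₀C⟩ := this
        intro h0
        have : v₀ ∈ (part P g).support := mem_support_part.mpr ⟨hv₀, hv₀C⟩
        rw [← hh, h0] at this
        simp at this
      have hhf : h * f ∈ D.edgeIdeal K := (hmemp h).mp hhp
      have hhfne : h * f ≠ 0 := mul_ne_zero hh0 hf0
      obtain ⟨vv, hvv⟩ := MvPolynomial.support_nonempty.mpr hhfne
      have hvvE : vv ∈ Exps D := (mem_edgeIdeal_iff D _).mp hhf vv hvv
      have hvs := MvPolynomial.support_mul _ _ hvv
      rw [Finset.mem_add] at hvs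
      obtain ⟨y, hy, z, hz, hyz⟩ := hvs
      have hyP : ∀ i ∈ C, y i = 0 := (mem_support_part.mp hy).2
      exact hrec y z hyP hz (by rw [hyz]; exact hvvE)

/-- An associated prime of the edge ideal has a monomial witness. -/
lemma exists_monomial_witness (D : WOGraph s) {p : Ideal (MvPolynomial (Fin s) K)}
    (hp : p.IsPrime) (f : MvPolynomial (Fin s) K)
    (hpf : p = Submodule.colon (D.edgeIdeal K) (Ideal.span {f})) :
    ∃ b : Fin s →₀ ℕ,
      p = Submodule.colon (D.edgeIdeal K) (Ideal.span {monomial b (1 : K)}) := by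
  have hpf2 : p = Submodule.colon (D.edgeIdeal K)
      (Ideal.span {part (Exps D)ᶜ f}) := by rw [hpf, colon_purify]
  exact witness_aux D hp (part (Exps D)ᶜ f).support.card _ le_rfl
    (fun v hv => (mem_support_part.mp hv).2) hpf2


lemma edge_mem' {D : WOGraph s} {e : Fin s × Fin s} (he : e ∈ D.E) : (e.1, e.2) ∈ D.E := by
  rwa [Prod.mk.eta]

lemma edge_ne {D : WOGraph s} {e : Fin s × Fin s} (he : e ∈ D.E) : e.1 ≠ e.2 := by
  intro h
  have he' := edge_mem' he
  rw [h] at he'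
  exact D.no_loops e.2 he'

lemma gen_apply (D : WOGraph s) (e : Fin s × Fin s) (j : Fin s) :
    gen D e j = (if e.1 = j then 1 else 0) + (if e.2 = j then D.w e.2 else 0) := by
  classical
  simp [gen, Finsupp.add_apply, Finsupp.single_apply]

lemma gen_le_iff {D : WOGraph s} {e : Fin s × Fin s} {v : Fin s →₀ ℕ} (hne : e.1 ≠ e.2) :
    gen D e ≤ v ↔ 1 ≤ v e.1 ∧ D.w e.2 ≤ v e.2 := by
  classical
  rw [Finsupp.le_def]
  constructor
  · intro h
    have h1 := h e.1
    have h2 := h e.2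
    rw [gen_apply, if_pos rfl, if_neg (fun hh => hne hh.symm)] at h1
    rw [gen_apply, if_pos rfl, if_neg hne] at h2
    omega
  · rintro ⟨h1, h2⟩ j
    rw [gen_apply]
    by_cases hj1 : e.1 = j
    · subst hj1
      rw [if_pos rfl, if_neg (fun hh => hne hh.symm)]
      omega
    · by_cases hj2 : e.2 = j
      · subst hj2
        rw [if_neg hj1, if_pos rfl]
        omega
      · rw [if_neg hj1, if_neg hj2]
        exact Nat.zero_le _

lemma gen_pair_le_iff {D : WOGraph s} {y z : Fin s} {v : Fin s →₀ ℕ} (hne : y ≠ z) :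
    gen D (y, z) ≤ v ↔ 1 ≤ v y ∧ D.w z ≤ v z := gen_le_iff hne

/-- Forward direction: a prime with a monomial witness gives a strong vertex cover. -/
lemma forward (D : WOGraph s) {p : Ideal (MvPolynomial (Fin s) K)} (hp : p.IsPrime)
    {b : Fin s →₀ ℕ}
    (hb : p = Submodule.colon (D.edgeIdeal K) (Ideal.span {monomial b (1 : K)})) :
    D.IsStrongVertexCover {i | MvPolynomial.X i ∈ p} ∧
      p = Ideal.span ((fun x => (MvPolynomial.X x : MvPolynomial (Fin s) K)) ''
        {i | MvPolynomial.X i ∈ p}) := by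
  classical
  set C : Set (Fin s) := {i | MvPolynomial.X i ∈ p} with hCdef
  have hmem : ∀ g : MvPolynomial (Fin s) K,
      g ∈ p ↔ g * monomial b 1 ∈ D.edgeIdeal K := fun g => by rw [hb, mem_colon_iff]
  have fact0 : b ∉ Exps D := by
    intro hbE
    apply hp.ne_top
    rw [Ideal.eq_top_iff_one]
    exact (hmem 1).mpr (by rw [one_mul]; exact monomial_mem_edgeIdeal D hbE)
  have fact2 : ∀ i ∈ C, Finsupp.single i 1 + b ∈ Exps D := by
    intro i hi
    have h1 := (hmem _).mp hi
    rw [X_mul_monomial] at h1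
    refine (mem_edgeIdeal_iff D _).mp h1 _ ?_
    rw [MvPolynomial.support_monomial, if_neg (one_ne_zero (α := K))]
    exact Finset.mem_singleton_self _
  have fact3 : ∀ d : Fin s →₀ ℕ, (∀ i ∈ C, d i = 0) → d + b ∉ Exps D := by
    intro d hd hdb
    have h1 : monomial d (1 : K) ∈ p := (hmem _).mpr
      (by rw [MvPolynomial.monomial_mul, one_mul]; exact monomial_mem_edgeIdeal D hdb)
    obtain ⟨i, hne, hXi⟩ := monomial_mem_prime hp h1
    exact hne (hd i hXi)
  have hpC : p = Ideal.span ((fun x => (MvPolynomial.X x : MvPolynomial (Fin s) K)) '' C) := by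
    apply le_antisymm
    · intro g hg
      rw [mem_spanX_iff]
      intro v hv
      by_contra hno
      push_neg at hno
      exact fact3 v hno (mem_exps_of_mul_monomial hv ((hmem g).mp hg))
    · rw [Ideal.span_le]
      rintro _ ⟨i, hi, rfl⟩
      exact hi
  have cover : D.IsVertexCover C := by
    intro e he
    by_contra hcon
    push_neg at hcon
    refine fact3 (gen D e) ?_ ⟨e, he, le_self_add⟩
    intro i hi
    rw [gen_apply, if_neg (fun h => hcon.1 (by rw [h]; exact hi)),
      if_neg (fun h => hcon.2 (by rw [h]; exact hi))]
  have bz : ∀ z ∈ C, b z < D.w z := by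
    intro z hz
    by_contra hge
    push_neg at hge
    obtain ⟨e, he, hle⟩ := fact2 z hz
    have hne := edge_ne he
    rw [gen_le_iff hne] at hle
    apply fact0
    refine ⟨e, he, (gen_le_iff hne).mpr ⟨?_, ?_⟩⟩
    · have h1 := hle.1
      rw [Finsupp.add_apply, Finsupp.single_apply] at h1
      by_cases hz1 : z = e.1
      · rw [← hz1]
        have := D.w_pos z
        omega
      · rw [if_neg hz1] at h1
        omega
    · have h2 := hle.2
      rw [Finsupp.add_apply, Finsupp.single_apply] at h2
      by_cases hz2 : z = e.2
      · subst hz2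
        exact hge
      · rw [if_neg hz2] at h2
        omega
  have strong3 : ∀ x ∈ D.L3 C, ∃ y, (y, x) ∈ D.E ∧ y ∈ D.L2 C ∪ D.L3 C ∧ 2 ≤ D.w y := by
    intro x hx3
    obtain ⟨hxC, hnb⟩ := hx3
    obtain ⟨e, he, hle⟩ := fact2 x hxC
    have hne := edge_ne he
    have he' := edge_mem' he
    rw [gen_le_iff hne] at hle
    have hnotle : ¬ gen D e ≤ b := fun hc => fact0 ⟨e, he, hc⟩
    rw [gen_le_iff hne] at hnotle
    by_cases hx1 : e.1 = x
    · exfalso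
      have h2C : e.2 ∈ C := hnb (Or.inl (by rw [← hx1]; exact he'))
      have hxne2 : x ≠ e.2 := by rw [← hx1]; exact hne
      have h2 := hle.2
      rw [Finsupp.add_apply, Finsupp.single_apply, if_neg hxne2] at h2
      have := bz e.2 h2C
      omega
    · have hb1 : 1 ≤ b e.1 := by
        have h1 := hle.1
        rw [Finsupp.add_apply, Finsupp.single_apply, if_neg (fun h => hx1 h.symm)] at h1
        omega
      have hx2 : x = e.2 := by
        by_contra hx2
        have h2 := hle.2
        rw [Finsupp.add_apply, Finsupp.single_apply, if_neg hx2] at h2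
        exact hnotle ⟨hb1, by omega⟩
      have hyC : e.1 ∈ C := hnb (Or.inr (by rw [hx2]; exact he'))
      have hwy : 2 ≤ D.w e.1 := by
        have := bz e.1 hyC
        omega
      have hyL1 : e.1 ∉ D.L1 C := by
        rintro ⟨-, z, hyz, hzC⟩
        refine fact3 (Finsupp.single z (D.w z)) ?_
          ⟨(e.1, z), hyz, (gen_pair_le_iff (y := e.1) (z := z) (edge_ne hyz)).mpr ⟨?_, ?_⟩⟩
        · intro i hiC
          rw [Finsupp.single_apply, if_neg (fun h => hzC (by rw [h]; exact hiC))]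
        · rw [Finsupp.add_apply, Finsupp.single_apply,
            if_neg (fun h => hzC (by rw [h]; exact hyC))]
          omega
        · rw [Finsupp.add_apply, Finsupp.single_eq_same]
          omega
      exact ⟨e.1, by rw [hx2]; exact he', mem_L2_union_L3 hyC hyL1, hwy⟩
  exact ⟨⟨cover, Or.inr strong3⟩, hpC⟩

/-- Backward direction: a strong vertex cover gives a witness for the span of its variables. -/
lemma backward (D : WOGraph s) {C : Set (Fin s)} (hC : D.IsStrongVertexCover C) :
    ∃ m : MvPolynomial (Fin s) K,
      Ideal.span ((fun x => (MvPolynomial.X x : MvPolynomial (Fin s) K)) '' C) =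
        Submodule.colon (D.edgeIdeal K) (Ideal.span {m}) := by
  classical
  set d : Fin s →₀ ℕ := Finsupp.equivFunOnFinite.symm
    (fun i => if i ∈ C then (if i ∈ D.L1 C then 0 else D.w i - 1) else D.w i) with hd
  have hdval : ∀ i, d i =
      if i ∈ C then (if i ∈ D.L1 C then 0 else D.w i - 1) else D.w i := by
    intro i
    rw [hd]
    rfl
  have key : ∀ v : Fin s →₀ ℕ, v + d ∈ Exps D ↔ ∃ i ∈ C, v i ≠ 0 := by
    intro v
    constructor
    · rintro ⟨e, he, hle⟩
      by_contra hno
      push_neg at hno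
      rw [gen_le_iff (edge_ne he)] at hle
      have he' := edge_mem' he
      by_cases h2C : e.2 ∈ C
      · have hv2 : v e.2 = 0 := hno e.2 h2C
        have h2 := hle.2
        rw [Finsupp.add_apply, hv2, hdval, if_pos h2C] at h2
        have hw := D.w_pos e.2
        by_cases h2L1 : e.2 ∈ D.L1 C
        · rw [if_pos h2L1] at h2
          omega
        · rw [if_neg h2L1] at h2
          omega
      · have h1C : e.1 ∈ C := by
          rcases hC.1 e he with h | h
          · exact h
          · exact absurd h h2C
        have h1L1 : e.1 ∈ D.L1 C := ⟨h1C, e.2, he', h2C⟩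
        have hv1 : v e.1 = 0 := hno e.1 h1C
        have h1 := hle.1
        rw [Finsupp.add_apply, hv1, hdval, if_pos h1C, if_pos h1L1] at h1
        omega
    · rintro ⟨i, hiC, hvi⟩
      have hvi1 : 1 ≤ v i := Nat.one_le_iff_ne_zero.mpr hvi
      by_cases hi1 : i ∈ D.L1 C
      · obtain ⟨-, z, hiz, hzC⟩ := hi1
        refine ⟨(i, z), hiz, (gen_pair_le_iff (y := i) (z := z) (edge_ne hiz)).mpr ⟨?_, ?_⟩⟩
        · rw [Finsupp.add_apply]
          omega
        · rw [Finsupp.add_apply, hdval, if_neg hzC]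
          omega
      · have hyex : ∃ y, (y, i) ∈ D.E ∧ 1 ≤ d y := by
          by_cases hi3 : i ∈ D.L3 C
          · rcases hC.2 with hmin | hstr
            · rw [minimal_L3_empty hmin] at hi3
              exact absurd hi3 (Set.notMem_empty i)
            · obtain ⟨y, hyi, hy23, hw2⟩ := hstr i hi3
              have hyC : y ∈ C := by
                rcases hy23 with h2 | h3
                · exact h2.1
                · exact h3.1
              have hyL1 : y ∉ D.L1 C := by
                rcases hy23 with h2 | h3
                · exact fun h1 => h2.2 (Or.inl h1)
                · exact fun h1 => Set.disjoint_left.mp (L1_disjoint_L3 D C) h1 h3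
              refine ⟨y, hyi, ?_⟩
              rw [hdval, if_pos hyC, if_neg hyL1]
              omega
          · have hnsub : ¬ D.neighbors i ⊆ C := fun hsub => hi3 ⟨hiC, hsub⟩
            obtain ⟨z, hznb, hzC⟩ := Set.not_subset.mp hnsub
            rcases hznb with hout | hin
            · exact absurd ⟨hiC, z, hout, hzC⟩ hi1
            · refine ⟨z, hin, ?_⟩
              rw [hdval, if_neg hzC]
              exact D.w_pos z
        obtain ⟨y, hyi, hdy⟩ := hyex
        refine ⟨(y, i), hyi, (gen_pair_le_iff (y := y) (z := i) (edge_ne hyi)).mpr ⟨?_, ?_⟩⟩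
        · rw [Finsupp.add_apply]
          omega
        · rw [Finsupp.add_apply, hdval, if_pos hiC, if_neg hi1]
          have := D.w_pos i
          omega
  refine ⟨monomial d 1, ?_⟩
  apply le_antisymm
  · rw [Ideal.span_le]
    rintro _ ⟨i, hiC, rfl⟩
    rw [SetLike.mem_coe, mem_colon_iff, X_mul_monomial]
    apply monomial_mem_edgeIdeal
    exact (key (Finsupp.single i 1)).mpr
      ⟨i, hiC, by rw [Finsupp.single_eq_same]; exact one_ne_zero⟩
  · intro g hg
    rw [mem_colon_iff] at hg
    rw [mem_spanX_iff]
    intro v hv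
    exact (key v).mp (mem_exps_of_mul_monomial hv hg)

end PRTAux


/-- **Corollary.** For a weighted oriented graph `D`, a prime ideal `p` of
`S = K[t_1,…,t_s]` is an associated prime of `I(D)` if and only if `p = (C)` for some
strong vertex cover `C` of `D`. -/
theorem assPrime_edgeIdeal_iff_strongVertexCover {s : ℕ} (K : Type*) [Field K]
    (D : WOGraph s) (p : Ideal (MvPolynomial (Fin s) K)) (hp : p.IsPrime) :
    p ∈ assPrimes (D.edgeIdeal K) ↔
      ∃ C : Set (Fin s), D.IsStrongVertexCover C ∧
        p = Ideal.span ((fun x => (X x : MvPolynomial (Fin s) K)) '' C) := by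
  constructor
  · rintro ⟨hp', f, hpf⟩
    obtain ⟨b, hb⟩ := PRTAux.exists_monomial_witness D hp f hpf
    obtain ⟨hstrong, heq⟩ := PRTAux.forward D hp hb
    exact ⟨_, hstrong, heq⟩
  · rintro ⟨C, hCs, hpC⟩
    obtain ⟨m, hm⟩ := PRTAux.backward (K := K) D hCs
    exact ⟨hp, m, by rw [hpC, hm]⟩
end

section
/- Let D be a weighted oriented graph with vertex set V(D) = {t_1,…,t_s} and edge ideal I(D) in S = K[t_1,…,t_s]. Then the irrelevant maximal ideal m = (t_1,…,t_s) is an associated prime of I(D) if and only if N_D^+(V⁺(D)) = V(D), where N_D^+(V⁺(D)) := {y ∈ V(D) : there exists x ∈ V⁺(D) with (x, y) ∈ E(D)}. -/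
open MvPolynomial Pointwise

/-- The irrelevant maximal ideal `m = (t_1, …, t_s)` of `S = K[t_1, …, t_s]`. -/
noncomputable def irrelevantIdeal (s : ℕ) (K : Type*) [Field K] : Ideal (MvPolynomial (Fin s) K) :=
  Ideal.span (Set.range (X : Fin s → MvPolynomial (Fin s) K))

section Aux

variable {σ : Type*} {K : Type*} [Field K]

/-- Membership in a monomial ideal: every exponent in the support is divisible by a
generator exponent. -/
lemma mem_monomialIdeal_iff (T : Set (σ →₀ ℕ)) (f : MvPolynomial σ K) :
    f ∈ Ideal.span ((fun a => (monomial a (1 : K))) '' T) ↔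
      ∀ b ∈ f.support, ∃ a ∈ T, a ≤ b := by
  constructor
  · intro hf b hb
    rw [Ideal.span, Submodule.mem_span_set'] at hf
    obtain ⟨n, c, g, hsum⟩ := hf
    rw [MvPolynomial.mem_support_iff, ← hsum] at hb
    have hex : ∃ i, coeff b (c i • (g i : MvPolynomial σ K)) ≠ 0 := by
      by_contra hcon
      push_neg at hcon
      apply hb
      rw [coeff_sum]
      exact Finset.sum_eq_zero (fun i _ => hcon i)
    obtain ⟨i, hi⟩ := hex
    obtain ⟨a, haT, hag⟩ := (g i).2
    rw [smul_eq_mul, ← hag, coeff_mul_monomial'] at hi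
    by_cases hle : a ≤ b
    · exact ⟨a, haT, hle⟩
    · simp [hle] at hi
  · intro h
    rw [← support_sum_monomial_coeff f]
    apply Ideal.sum_mem
    intro b hb
    obtain ⟨a, haT, hab⟩ := h b hb
    have heq : (monomial b (coeff b f) : MvPolynomial σ K)
        = monomial a 1 * monomial (b - a) (coeff b f) := by
      rw [monomial_mul, one_mul, add_tsub_cancel_of_le hab]
    rw [heq]
    exact Ideal.mul_mem_right _ _ (Ideal.subset_span ⟨a, haT, rfl⟩)

lemma edgeIdeal_eq {s : ℕ} (D : WOGraph s) (K : Type*) [Field K] :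
    D.edgeIdeal K = Ideal.span ((fun a => (monomial a (1 : K))) ''
      {a | ∃ e ∈ D.E, a = Finsupp.single e.1 1 + Finsupp.single e.2 (D.w e.2)}) := by
  unfold WOGraph.edgeIdeal
  congr 1
  ext f
  constructor
  · rintro ⟨e, he, rfl⟩
    refine ⟨_, ⟨e, he, rfl⟩, ?_⟩
    rw [← pow_one (X e.1 : MvPolynomial (Fin s) K), X_pow_eq_monomial,
      X_pow_eq_monomial, monomial_mul, one_mul]
  · rintro ⟨a, ⟨e, he, rfl⟩, rfl⟩
    refine ⟨e, he, ?_⟩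
    rw [← pow_one (X e.1 : MvPolynomial (Fin s) K), X_pow_eq_monomial,
      X_pow_eq_monomial, monomial_mul, one_mul]

lemma irrelevantIdeal_eq (s : ℕ) (K : Type*) [Field K] :
    irrelevantIdeal s K = Ideal.span ((fun a => (monomial a (1 : K))) ''
      {a | ∃ i : Fin s, a = Finsupp.single i 1}) := by
  unfold irrelevantIdeal
  congr 1
  ext f
  constructor
  · rintro ⟨i, rfl⟩
    refine ⟨_, ⟨i, rfl⟩, ?_⟩
    rw [← pow_one (X i : MvPolynomial (Fin s) K), X_pow_eq_monomial]
  · rintro ⟨a, ⟨i, rfl⟩, rfl⟩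
    exact ⟨i, by rw [← pow_one (X i : MvPolynomial (Fin s) K), X_pow_eq_monomial]⟩

lemma mem_irrelevantIdeal_iff (s : ℕ) (K : Type*) [Field K] (f : MvPolynomial (Fin s) K) :
    f ∈ irrelevantIdeal s K ↔ constantCoeff f = 0 := by
  rw [irrelevantIdeal_eq, mem_monomialIdeal_iff]
  constructor
  · intro h
    by_contra hc
    have h0 : (0 : Fin s →₀ ℕ) ∈ f.support := by
      rw [MvPolynomial.mem_support_iff]
      rwa [show coeff 0 f = constantCoeff f from rfl]
    obtain ⟨a, ⟨i, rfl⟩, hle⟩ := h 0 h0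
    have := Finsupp.le_def.mp hle i
    simp at this
  · intro h b hb
    have hbne : b ≠ 0 := by
      rintro rfl
      rw [MvPolynomial.mem_support_iff] at hb
      exact hb h
    obtain ⟨i, hi⟩ : ∃ i, b i ≠ 0 := by
      by_contra hc
      push_neg at hc
      exact hbne (Finsupp.ext hc)
    exact ⟨Finsupp.single i 1, ⟨i, rfl⟩, Finsupp.single_le_iff.mpr (Nat.one_le_iff_ne_zero.mpr hi)⟩

lemma irrelevantIdeal_isPrime (s : ℕ) (K : Type*) [Field K] :
    (irrelevantIdeal s K).IsPrime := by
  have : irrelevantIdeal s K = RingHom.ker (constantCoeff : MvPolynomial (Fin s) K →+* K) := by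
    ext f
    rw [mem_irrelevantIdeal_iff, RingHom.mem_ker]
  rw [this]
  exact RingHom.ker_isPrime _

lemma mem_colon_singleton' {R : Type*} [CommRing R] (I : Ideal R) (x r : R) :
    r ∈ Submodule.colon I (Ideal.span {x}) ↔ r * x ∈ I := by
  have h : (Ideal.span {x} : Ideal R) = Submodule.span R {x} := rfl
  rw [h, Submodule.mem_colon_span_singleton, smul_eq_mul]

end Aux

/-- **Proposition.** For a weighted oriented graph `D`, the irrelevant maximal ideal
`m = (t_1,…,t_s)` is an associated prime of `I(D)` if and only if
`N_D⁺(V⁺(D)) = V(D)`, i.e., every vertex receives an edge from a vertex of weight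
greater than one. -/
theorem irrelevant_mem_assPrimes_edgeIdeal_iff {s : ℕ} (K : Type*) [Field K]
    (D : WOGraph s) :
    irrelevantIdeal s K ∈ assPrimes (D.edgeIdeal K) ↔
      { y : Fin s | ∃ x : Fin s, 1 < D.w x ∧ (x, y) ∈ D.E } = Set.univ := by
  -- the exponent vector of the generator attached to an edge
  set de : Fin s × Fin s → (Fin s →₀ ℕ) :=
    fun e => Finsupp.single e.1 1 + Finsupp.single e.2 (D.w e.2) with hde
  have deapp : ∀ (e : Fin s × Fin s) (t : Fin s),
      de e t = (if e.1 = t then 1 else 0) + (if e.2 = t then D.w e.2 else 0) := by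
    intro e t
    simp [hde, Finsupp.add_apply, Finsupp.single_apply]
  have hTne : ∀ e ∈ D.E, e.1 ≠ e.2 := by
    rintro ⟨i, j⟩ he h
    dsimp at h
    subst h
    exact D.no_loops i he
  have memI : ∀ f : MvPolynomial (Fin s) K,
      f ∈ D.edgeIdeal K ↔ ∀ b ∈ f.support, ∃ e ∈ D.E, de e ≤ b := by
    intro f
    rw [edgeIdeal_eq, mem_monomialIdeal_iff]
    constructor
    · intro h b hb
      obtain ⟨a, ⟨e, he, rfl⟩, hle⟩ := h b hb
      exact ⟨e, he, hle⟩
    · intro h b hb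
      obtain ⟨e, he, hle⟩ := h b hb
      exact ⟨de e, ⟨e, he, rfl⟩, hle⟩
  constructor
  · rintro ⟨hprime, f, hcolon⟩
    -- f ∉ I(D)
    have hfI : f ∉ D.edgeIdeal K := by
      intro hf
      have h1 : (1 : MvPolynomial (Fin s) K) ∈ irrelevantIdeal s K := by
        rw [hcolon, mem_colon_singleton', one_mul]
        exact hf
      rw [mem_irrelevantIdeal_iff] at h1
      simp at h1
    obtain ⟨b, hbsupp, hb⟩ : ∃ b ∈ f.support, ∀ e ∈ D.E, ¬ de e ≤ b := by
      rw [memI] at hfI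
      push_neg at hfI
      obtain ⟨b, hbs, hbe⟩ := hfI
      exact ⟨b, hbs, fun e he => hbe e he⟩
    -- for every vertex k, X k * f ∈ I(D)
    have key : ∀ k : Fin s, ∃ e ∈ D.E, de e ≤ Finsupp.single k 1 + b := by
      intro k
      have hXk : X k * f ∈ D.edgeIdeal K := by
        have hXm : (X k : MvPolynomial (Fin s) K) ∈ irrelevantIdeal s K :=
          Ideal.subset_span ⟨k, rfl⟩
        rw [hcolon, mem_colon_singleton'] at hXm
        exact hXm
      rw [memI] at hXk
      apply hXk
      rw [MvPolynomial.mem_support_iff, coeff_X_mul]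
      exact MvPolynomial.mem_support_iff.mp hbsupp
    -- claim 1: b z < w z for all z
    have claim1 : ∀ z : Fin s, b z < D.w z := by
      intro z
      by_contra hcon
      push_neg at hcon
      obtain ⟨e, he, hle⟩ := key z
      have hne := hTne e he
      apply hb e he
      rw [Finsupp.le_def]
      intro t
      have ht := Finsupp.le_def.mp hle t
      have hrhs : ((Finsupp.single z 1 + b) : Fin s →₀ ℕ) t
          = (if z = t then 1 else 0) + b t := by
        rw [Finsupp.add_apply, Finsupp.single_apply]
      rw [deapp, hrhs] at ht
      rw [deapp]
      by_cases h1 : e.1 = t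
      · have h2 : e.2 ≠ t := fun h => hne (h1.trans h.symm)
        rw [if_pos h1, if_neg h2, add_zero] at ht ⊢
        by_cases hz : z = t
        · subst hz
          have := D.w_pos z
          omega
        · rw [if_neg hz, zero_add] at ht
          exact ht
      · rw [if_neg h1, zero_add] at ht ⊢
        by_cases h2 : e.2 = t
        · rw [if_pos h2] at ht ⊢
          by_cases hz : z = t
          · subst hz
            rw [h2]
            rw [h2] at ht
            omega
          · rw [if_neg hz, zero_add] at ht
            exact ht
        · rw [if_neg h2] at ht ⊢
          exact Nat.zero_le _
    -- conclude
    rw [Set.eq_univ_iff_forall]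
    intro y
    obtain ⟨e, he, hle⟩ := key y
    have hnle := hb e he
    have hne := hTne e he
    have hcoord : ∀ t : Fin s, t ≠ y → de e t ≤ b t := by
      intro t hty
      have ht := Finsupp.le_def.mp hle t
      have hrhs : ((Finsupp.single y 1 + b) : Fin s →₀ ℕ) t = b t := by
        rw [Finsupp.add_apply, Finsupp.single_apply,
          if_neg (fun h : y = t => hty h.symm), zero_add]
      rw [hrhs] at ht
      exact ht
    by_cases h2 : e.2 = y
    · -- the good case: (e.1, y) ∈ E and w e.1 > 1
      have h1y : e.1 ≠ y := fun h => hne (h.trans h2.symm)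
      have hb1 : 1 ≤ b e.1 := by
        have hc1 := hcoord e.1 h1y
        rw [deapp, if_pos rfl, if_neg (fun h : e.2 = e.1 => hne h.symm), add_zero] at hc1
        exact hc1
      have hwx : 1 < D.w e.1 := lt_of_le_of_lt hb1 (claim1 e.1)
      refine ⟨e.1, hwx, ?_⟩
      have he' : (e.1, e.2) ∈ D.E := by rwa [Prod.mk.eta]
      rwa [h2] at he'
    · -- impossible case
      exfalso
      by_cases h1 : e.1 = y
      · -- then w e.2 ≤ b e.2, contradicting claim1
        have hc2 := hcoord e.2 h2
        rw [deapp, if_pos rfl, if_neg (fun h : e.1 = e.2 => hne h), zero_add] at hc2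
        exact absurd hc2 (not_le.mpr (claim1 e.2))
      · -- de e ≤ b, contradicting hb
        apply hnle
        rw [Finsupp.le_def]
        intro t
        by_cases hty : t = y
        · subst hty
          rw [deapp, if_neg h1, if_neg h2, add_zero]
          exact Nat.zero_le _
        · exact hcoord t hty
  · intro hyp
    have hyp' : ∀ y : Fin s, ∃ x : Fin s, 1 < D.w x ∧ (x, y) ∈ D.E := by
      intro y
      exact Set.eq_univ_iff_forall.mp hyp y
    set a0 : Fin s →₀ ℕ := Finsupp.equivFunOnFinite.symm (fun i => D.w i - 1) with ha0
    have ha0app : ∀ i, a0 i = D.w i - 1 := fun i => rfl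
    set u : MvPolynomial (Fin s) K := monomial a0 1 with hu
    refine ⟨irrelevantIdeal_isPrime s K, u, ?_⟩
    apply le_antisymm
    · -- m ≤ (I : u)
      unfold irrelevantIdeal
      rw [Ideal.span_le]
      rintro _ ⟨k, rfl⟩
      rw [SetLike.mem_coe, mem_colon_singleton']
      have hXu : (X k : MvPolynomial (Fin s) K) * u
          = monomial (Finsupp.single k 1 + a0) 1 := by
        rw [hu, ← pow_one (X k : MvPolynomial (Fin s) K), X_pow_eq_monomial,
          monomial_mul, one_mul]
      rw [hXu, memI]
      intro b hb
      have hbeq : b = Finsupp.single k 1 + a0 := by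
        have hcb := MvPolynomial.mem_support_iff.mp hb
        rw [coeff_monomial] at hcb
        by_cases h : Finsupp.single k 1 + a0 = b
        · exact h.symm
        · simp [h] at hcb
      subst hbeq
      obtain ⟨x, hwx, hxk⟩ := hyp' k
      have hxkne : x ≠ k := fun h => D.no_loops k (h ▸ hxk)
      refine ⟨(x, k), hxk, ?_⟩
      rw [Finsupp.le_def]
      intro t
      have hlhs : de (x, k) t = (if x = t then 1 else 0) + (if k = t then D.w k else 0) :=
        deapp (x, k) t
      have hrhs : ((Finsupp.single k 1 + a0) : Fin s →₀ ℕ) t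
          = (if k = t then 1 else 0) + (D.w t - 1) := by
        rw [Finsupp.add_apply, Finsupp.single_apply, ha0app]
      rw [hlhs, hrhs]
      by_cases htx : x = t
      · have htk : k ≠ t := fun h => hxkne (htx.trans h.symm)
        rw [if_pos htx, if_neg htk, if_neg htk, add_zero, zero_add]
        subst htx
        omega
      · rw [if_neg htx, zero_add]
        by_cases htk : k = t
        · rw [if_pos htk, if_pos htk]
          subst htk
          have := D.w_pos k
          omega
        · rw [if_neg htk, if_neg htk, zero_add]
          exact Nat.zero_le _
    · -- (I : u) ≤ m
      intro g hg
      rw [mem_colon_singleton'] at hg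
      rw [mem_irrelevantIdeal_iff]
      by_contra hcg
      have hsupp : a0 ∈ (g * u).support := by
        rw [MvPolynomial.mem_support_iff, hu, coeff_mul_monomial', if_pos le_rfl,
          tsub_self, mul_one]
        exact hcg
      rw [memI] at hg
      obtain ⟨e, he, hle⟩ := hg a0 hsupp
      have hle2 := Finsupp.le_def.mp hle e.2
      have hne := hTne e he
      rw [deapp, if_neg hne, if_pos rfl, zero_add, ha0app] at hle2
      have hwpos := D.w_pos e.2
      omega
end
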